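/- Let P ∈ ℝ^{N×N} be an idempotent matrix (P² = P) with P ≠ 0 and P ≠ I_N. Then ‖I_N − P‖₂ = ‖P‖₂, where ‖·‖₂ is the spectral norm. -/

import Mathlib

open Matrix BigOperators ContinuousLinearMap

/-- Euclidean norm of a vector in `ℝ^n`. -/
noncomputable def eNorm {n : ℕ} (x : Fin n → ℝ) : ℝ := Real.sqrt (∑ i, x i ^ 2)

/-- Spectral norm of a matrix: the maximum of `|Ax|` over unit vectors `x` (realized as a
supremum, which is attained since the unit sphere is compact). -/
noncomputable def specNorm {n m : ℕ} (A : Matrix (Fin n) (Fin m) ℝ) : ℝ :=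
  sSup ((fun x => eNorm (A.mulVec x)) '' {x : Fin m → ℝ | eNorm x = 1})

lemma eNorm_eq_norm {n : ℕ} (x : Fin n → ℝ) :
    eNorm x = ‖(WithLp.equiv 2 (Fin n → ℝ)).symm x‖ := by
  rw [eNorm, EuclideanSpace.norm_eq]
  congr 1
  apply Finset.sum_congr rfl
  intro i _
  rw [WithLp.equiv_symm_apply, PiLp.toLp_apply, Real.norm_eq_abs, sq_abs]

/-- The matrix as a continuous linear map between Euclidean spaces. -/
noncomputable def matCLM {n m : ℕ} (A : Matrix (Fin n) (Fin m) ℝ) :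
    EuclideanSpace ℝ (Fin m) →L[ℝ] EuclideanSpace ℝ (Fin n) :=
  LinearMap.toContinuousLinearMap (Matrix.toEuclideanLin A)

lemma matCLM_apply {n m : ℕ} (A : Matrix (Fin n) (Fin m) ℝ) (v : EuclideanSpace ℝ (Fin m)) :
    matCLM A v = (WithLp.equiv 2 (Fin n → ℝ)).symm (A.mulVec ((WithLp.equiv 2 (Fin m → ℝ)) v)) :=
  Matrix.toEuclideanLin_apply A v

lemma specNorm_eq_opNorm {n m : ℕ} (hm : 0 < m) (A : Matrix (Fin n) (Fin m) ℝ) :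
    specNorm A = ‖matCLM A‖ := by
  have himg : ((fun x => eNorm (A.mulVec x)) '' {x : Fin m → ℝ | eNorm x = 1})
      = (fun v : EuclideanSpace ℝ (Fin m) => ‖matCLM A v‖) '' {v | ‖v‖ = 1} := by
    ext r
    constructor
    · rintro ⟨x, hx, rfl⟩
      refine ⟨(WithLp.equiv 2 (Fin m → ℝ)).symm x, ?_, ?_⟩
      · simpa [eNorm_eq_norm] using hx
      · simp [matCLM_apply, eNorm_eq_norm]
    · rintro ⟨v, hv, rfl⟩
      refine ⟨(WithLp.equiv 2 (Fin m → ℝ)) v, ?_, ?_⟩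
      · simpa [eNorm_eq_norm] using hv
      · simp [matCLM_apply, eNorm_eq_norm]
  rw [specNorm, himg]
  set f := matCLM A
  have hne : ({v : EuclideanSpace ℝ (Fin m) | ‖v‖ = 1}).Nonempty := by
    haveI : Nontrivial (EuclideanSpace ℝ (Fin m)) := by
      refine ⟨(WithLp.equiv 2 (Fin m → ℝ)).symm (fun _ => 1), 0, ?_⟩
      intro h
      have := congrArg (fun w => (WithLp.equiv 2 (Fin m → ℝ)) w ⟨0, hm⟩) h
      simp at this
    obtain ⟨v, hv⟩ := exists_norm_eq (EuclideanSpace ℝ (Fin m)) (zero_le_one (α := ℝ))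
    exact ⟨v, hv⟩
  have hbdd : BddAbove ((fun v : EuclideanSpace ℝ (Fin m) => ‖f v‖) '' {v | ‖v‖ = 1}) := by
    refine ⟨‖f‖, ?_⟩
    rintro r ⟨v, hv, rfl⟩
    calc ‖f v‖ ≤ ‖f‖ * ‖v‖ := f.le_opNorm v
    _ = ‖f‖ := by rw [Set.mem_setOf_eq.mp hv, mul_one]
  apply le_antisymm
  · apply csSup_le (hne.image _)
    rintro r ⟨v, hv, rfl⟩
    calc ‖f v‖ ≤ ‖f‖ * ‖v‖ := f.le_opNorm v
    _ = ‖f‖ := by rw [Set.mem_setOf_eq.mp hv, mul_one]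
  · have h0 : 0 ≤ sSup ((fun v : EuclideanSpace ℝ (Fin m) => ‖f v‖) '' {v | ‖v‖ = 1}) := by
      obtain ⟨v, hv⟩ := hne
      exact le_trans (norm_nonneg (f v)) (le_csSup hbdd ⟨v, hv, rfl⟩)
    apply f.opNorm_le_bound h0
    intro x
    rcases eq_or_ne x 0 with rfl | hx
    · simp
    · have hxn : ‖x‖ ≠ 0 := norm_ne_zero_iff.mpr hx
      have hmem : ‖x‖⁻¹ • x ∈ {v : EuclideanSpace ℝ (Fin m) | ‖v‖ = 1} := by
        simp [norm_smul, abs_of_nonneg (inv_nonneg.mpr (norm_nonneg x)), inv_mul_cancel₀ hxn]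
      have := le_csSup hbdd ⟨_, hmem, rfl⟩
      have heq : ‖f (‖x‖⁻¹ • x)‖ = ‖x‖⁻¹ * ‖f x‖ := by
        rw [f.map_smul, norm_smul, Real.norm_eq_abs, abs_of_nonneg (inv_nonneg.mpr (norm_nonneg x))]
      simp only [] at this
      rw [heq] at this
      calc ‖f x‖ = (‖x‖⁻¹ * ‖f x‖) * ‖x‖ := by field_simp
      _ ≤ _ * ‖x‖ := by gcongr



lemma opNorm_one_le_idem {E : Type*} [NormedAddCommGroup E] [InnerProductSpace ℝ E]
    (q : E →L[ℝ] E) (hq : q * q = q) (hq0 : q ≠ 0) : 1 ≤ ‖q‖ := by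
  have h1 : 0 < ‖q‖ := norm_pos_iff.mpr hq0
  have h2 : ‖q‖ ≤ ‖q‖ * ‖q‖ := by
    calc ‖q‖ = ‖q * q‖ := by rw [hq]
    _ ≤ ‖q‖ * ‖q‖ := norm_mul_le q q
  nlinarith

set_option maxHeartbeats 1000000 in
lemma opNorm_idem_le {E : Type*} [NormedAddCommGroup E] [InnerProductSpace ℝ E]
    [FiniteDimensional ℝ E]
    (p : E →L[ℝ] E) (hp : p * p = p) (hp0 : p ≠ 0) (hq0 : (1 : E →L[ℝ] E) - p ≠ 0) :
    ‖p‖ ≤ ‖1 - p‖ := by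
  set q : E →L[ℝ] E := 1 - p with hqdef
  have hq : q * q = q := by
    simp only [hqdef, sub_mul, mul_sub, one_mul, mul_one, hp]
    abel
  have hq1 : 1 ≤ ‖q‖ := opNorm_one_le_idem q hq hq0
  by_cases hc : ‖p‖ ≤ 1
  · linarith
  push_neg at hc
  -- nontrivial
  have hnt : Nontrivial E := by
    by_contra h
    apply hp0
    have : Subsingleton E := not_nontrivial_iff_subsingleton.mp h
    ext x
    simp [Subsingleton.elim (p x) 0]
  -- maximizer on the sphere
  have hcompact : IsCompact (Metric.sphere (0 : E) 1) := isCompact_sphere 0 1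
  have hne : (Metric.sphere (0 : E) 1).Nonempty := NormedSpace.sphere_nonempty.mpr zero_le_one
  obtain ⟨x₀, hx₀mem, hmax⟩ := hcompact.exists_isMaxOn hne
    ((continuous_norm.comp p.continuous).continuousOn)
  have hx₀norm : ‖x₀‖ = 1 := mem_sphere_zero_iff_norm.mp hx₀mem
  have hx₀ne : x₀ ≠ 0 := by
    intro h; rw [h, norm_zero] at hx₀norm; exact one_ne_zero hx₀norm.symm
  -- ‖p x₀‖ = ‖p‖
  have hpx : ‖p x₀‖ = ‖p‖ := by
    apply le_antisymm
    · calc ‖p x₀‖ ≤ ‖p‖ * ‖x₀‖ := p.le_opNorm x₀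
      _ = ‖p‖ := by rw [hx₀norm, mul_one]
    · apply p.opNorm_le_bound (norm_nonneg _)
      intro x
      rcases eq_or_ne x 0 with rfl | hx
      · simp
      · have hxn : ‖x‖ ≠ 0 := norm_ne_zero_iff.mpr hx
        have hmem : ‖x‖⁻¹ • x ∈ Metric.sphere (0 : E) 1 := by
          simp [norm_smul, abs_of_nonneg (inv_nonneg.mpr (norm_nonneg x)),
            inv_mul_cancel₀ hxn]
        have h := hmax hmem
        simp only [Function.comp_apply, _root_.map_smul, norm_smul, Real.norm_eq_abs,
          abs_of_nonneg (inv_nonneg.mpr (norm_nonneg x)), Set.mem_setOf_eq] at h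
        calc ‖p x‖ = (‖x‖⁻¹ * ‖p x‖) * ‖x‖ := by field_simp
        _ ≤ ‖p x₀‖ * ‖x‖ := by gcongr
  set c : ℝ := ‖p‖ with hcdef
  have hc2 : (1:ℝ) < c := hc
  have hc2pos : (0:ℝ) < c ^ 2 := by positivity
  -- self-adjoint operator S = p† ∘ p
  set S : E →L[ℝ] E := adjoint p ∘L p with hSdef
  have hS : IsSelfAdjoint S := by
    rw [_root_.IsSelfAdjoint, star_eq_adjoint, hSdef, adjoint_comp, adjoint_adjoint]
  have hre : ∀ x : E, S.reApplyInnerSelf x = ‖p x‖ ^ 2 := by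
    intro x
    rw [reApplyInnerSelf]
    simp only [hSdef, ContinuousLinearMap.comp_apply]
    rw [adjoint_inner_left]
    simp [real_inner_self_eq_norm_sq]
  -- x₀ maximizes the Rayleigh numerator on the sphere
  have hextr : IsMaxOn S.reApplyInnerSelf (Metric.sphere (0 : E) ‖x₀‖) x₀ := by
    intro x hx
    rw [hx₀norm] at hx
    have := hmax hx
    simp only [Set.mem_setOf_eq, hre]
    have h1 : ‖p x‖ ≤ ‖p x₀‖ := this
    have h2 : 0 ≤ ‖p x‖ := norm_nonneg _
    nlinarith
  have hev := hS.hasEigenvector_of_isLocalExtrOn hx₀ne (Or.inr hextr.localize)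
  have heig : S x₀ = (S.rayleighQuotient x₀) • x₀ := by
    have := hev.apply_eq_smul
    simpa using this
  have hray : S.rayleighQuotient x₀ = c ^ 2 := by
    rw [ContinuousLinearMap.rayleighQuotient, hre, hx₀norm, hpx]
    simp
  rw [hray] at heig
  -- adjoint p x₀ = x₀
  have hadj : adjoint p x₀ = x₀ := by
    have h1 : adjoint p (S x₀) = S x₀ := by
      simp only [hSdef, ContinuousLinearMap.comp_apply]
      rw [← ContinuousLinearMap.comp_apply (adjoint p) (adjoint p), ← adjoint_comp]
      congr 1
      exact congrArg adjoint (by simpa [ContinuousLinearMap.mul_def] using hp)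
    rw [heig] at h1
    rw [_root_.map_smul] at h1
    exact smul_right_injective E (ne_of_gt hc2pos) h1
  -- key inner product
  have hinner : inner ℝ x₀ (p x₀) = (1:ℝ) := by
    have : (inner ℝ (adjoint p x₀) x₀ : ℝ) = inner ℝ x₀ (p x₀) := adjoint_inner_left p x₀ x₀
    rw [hadj] at this
    rw [← this, real_inner_self_eq_norm_sq, hx₀norm]
    norm_num
  have hppx : p (p x₀) = p x₀ := by
    have := congrFun (congrArg DFunLike.coe hp) x₀
    simpa [ContinuousLinearMap.mul_apply] using this
  -- the test vector y
  set y : E := x₀ - (c ^ 2)⁻¹ • p x₀ with hydef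
  have hqy : q y = x₀ - p x₀ := by
    simp only [hqdef, hydef, ContinuousLinearMap.sub_apply, ContinuousLinearMap.one_apply,
      map_sub, _root_.map_smul, hppx]
    module
  have hnqy : ‖q y‖ ^ 2 = c ^ 2 - 1 := by
    rw [hqy, norm_sub_sq_real, hinner, hx₀norm, hpx]
    ring
  have hny : ‖y‖ ^ 2 = (c ^ 2 - 1) / c ^ 2 := by
    rw [hydef, norm_sub_sq_real, real_inner_smul_right, hinner, norm_smul, hx₀norm]
    rw [mul_pow, Real.norm_eq_abs, sq_abs, hpx]
    field_simp
    ring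
  have hyne : y ≠ 0 := by
    intro h
    rw [h, norm_zero] at hny
    have : c ^ 2 - 1 > 0 := by nlinarith
    rw [zero_pow (by norm_num)] at hny
    have := (div_eq_zero_iff.mp hny.symm)
    rcases this with h' | h' <;> nlinarith
  have hbound : ‖q y‖ ≤ ‖q‖ * ‖y‖ := q.le_opNorm y
  have hypos : 0 < ‖y‖ := norm_pos_iff.mpr hyne
  -- conclude c ≤ ‖q‖
  have hsq1 : ‖q y‖ ^ 2 ≤ ‖q‖ ^ 2 * ‖y‖ ^ 2 := by
    nlinarith [norm_nonneg (q y), norm_nonneg q, norm_nonneg y]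
  have hkey : c ^ 2 * ‖y‖ ^ 2 = ‖q y‖ ^ 2 := by
    rw [hny, hnqy]
    field_simp
  have h2 : c ^ 2 ≤ ‖q‖ ^ 2 := by
    have h3 : c ^ 2 * ‖y‖ ^ 2 ≤ ‖q‖ ^ 2 * ‖y‖ ^ 2 := by rw [hkey]; exact hsq1
    have h4 : 0 < ‖y‖ ^ 2 := by positivity
    exact le_of_mul_le_mul_right h3 h4
  nlinarith [h2, hq1, hc2, norm_nonneg q]

lemma opNorm_one_sub_idem {E : Type*} [NormedAddCommGroup E] [InnerProductSpace ℝ E]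
    [FiniteDimensional ℝ E]
    (p : E →L[ℝ] E) (hp : p * p = p) (hp0 : p ≠ 0) (hp1 : p ≠ 1) :
    ‖(1 : E →L[ℝ] E) - p‖ = ‖p‖ := by
  have hq0 : (1 : E →L[ℝ] E) - p ≠ 0 := by
    intro h
    apply hp1
    have := sub_eq_zero.mp h
    exact this.symm
  have hq : ((1 : E →L[ℝ] E) - p) * (1 - p) = 1 - p := by
    simp only [sub_mul, mul_sub, one_mul, mul_one, hp]
    abel
  have h1 : ‖p‖ ≤ ‖1 - p‖ := opNorm_idem_le p hp hp0 hq0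
  have h2 : ‖1 - p‖ ≤ ‖p‖ := by
    have := opNorm_idem_le (1 - p) hq hq0 (by simpa using hp0)
    simpa using this
  linarith
lemma matCLM_mul {n : ℕ} (A B : Matrix (Fin n) (Fin n) ℝ) :
    matCLM (A * B) = matCLM A * matCLM B := by
  ext v
  simp [ContinuousLinearMap.mul_apply, matCLM_apply, Matrix.mulVec_mulVec]

lemma matCLM_one {n : ℕ} : matCLM (1 : Matrix (Fin n) (Fin n) ℝ) = 1 := by
  ext v
  simp [matCLM_apply, Matrix.one_mulVec]

lemma matCLM_sub {n : ℕ} (A B : Matrix (Fin n) (Fin n) ℝ) :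
    matCLM (A - B) = matCLM A - matCLM B := by
  ext v
  simp [matCLM_apply, Matrix.sub_mulVec]

lemma matCLM_injective {n : ℕ} : Function.Injective (matCLM (n := n) (m := n)) := by
  intro A B h
  ext i j
  have := congrArg (fun f : EuclideanSpace ℝ (Fin n) →L[ℝ] EuclideanSpace ℝ (Fin n) =>
    (WithLp.equiv 2 (Fin n → ℝ)) (f ((WithLp.equiv 2 (Fin n → ℝ)).symm (Pi.single j 1))) i) h
  simpa [matCLM_apply, Matrix.mulVec_single] using this

lemma matCLM_zero {n : ℕ} : matCLM (0 : Matrix (Fin n) (Fin n) ℝ) = 0 := by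
  ext v
  simp [matCLM_apply, Matrix.zero_mulVec]

/-- If `P ∈ ℝ^{N×N}` is idempotent with `P ≠ 0` and `P ≠ I`, then `‖I - P‖₂ = ‖P‖₂`. -/
theorem spectral_norm_complementary_projector {N : ℕ} (hN : 0 < N)
    (P : Matrix (Fin N) (Fin N) ℝ) (hP : P * P = P) (h0 : P ≠ 0) (h1 : P ≠ 1) :
    specNorm (1 - P) = specNorm P := by
  rw [specNorm_eq_opNorm hN, specNorm_eq_opNorm hN, matCLM_sub, matCLM_one]
  have hmul : matCLM P * matCLM P = matCLM P := by
    rw [← matCLM_mul, hP]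
  have h0' : matCLM P ≠ 0 := by
    intro h
    exact h0 (matCLM_injective (h.trans matCLM_zero.symm))
  have h1' : matCLM P ≠ 1 := by
    intro h
    exact h1 (matCLM_injective (h.trans matCLM_one.symm))
  exact opNorm_one_sub_idem (matCLM P) hmul h0' h1'
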